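/- The characteristic polynomial of A, regarded as a matrix with real entries, has 2n+1 pairwise distinct real roots; that is, there exist real numbers λ₁ < λ₂ < … < λ_{2n+1}, each of which is a root of the characteristic polynomial of A over ℝ. In particular, every eigenvalue of A has multiplicity 1. -/

import Mathlib

open Polynomial Matrix

lemma my_charpoly_conj {m : ℕ} (P D Q : Matrix (Fin m) (Fin m) ℝ)
    (hPQ : P * Q = 1) : (P * D * Q).charpoly = D.charpoly := by
  have hmap : ∀ M N : Matrix (Fin m) (Fin m) ℝ,
      (M * N).map (C : ℝ → ℝ[X]) = M.map C * N.map C := by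
    intro M N; exact Matrix.map_mul
  have h1 : (P.map (C : ℝ → ℝ[X])) * (Q.map C) = 1 := by
    rw [← hmap, hPQ]; ext i j; by_cases h : i = j <;> simp [Matrix.one_apply, h]
  have hcm : charmatrix (P * D * Q) = (P.map C) * charmatrix D * (Q.map C) := by
    unfold charmatrix
    simp only [RingHom.mapMatrix_apply]
    rw [mul_sub, sub_mul]
    congr 1
    · rw [mul_assoc, (Matrix.scalar_commute (X : ℝ[X]) (Commute.all X) (Q.map C)).eq,
        ← mul_assoc, h1, one_mul]
    · rw [hmap, hmap]
  rw [Matrix.charpoly, hcm, det_mul, det_mul, mul_comm ((P.map C).det),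
    mul_assoc, ← det_mul, h1, det_one, mul_one, Matrix.charpoly]

lemma my_charpoly_diag {m : ℕ} (v : Fin m → ℝ) :
    (Matrix.diagonal v).charpoly = ∏ i, (X - C (v i)) := by
  rw [Matrix.charpoly]
  have : charmatrix (Matrix.diagonal v) = Matrix.diagonal (fun i => X - C (v i)) := by
    ext i j
    by_cases h : i = j
    · subst h; simp [charmatrix_apply_eq]
    · simp [charmatrix_apply_ne _ _ _ h, Matrix.diagonal_apply_ne _ h,
        Matrix.diagonal_apply_ne v h]
  rw [this, det_diagonal]

lemma my_herm_charpoly {m : ℕ} {B : Matrix (Fin m) (Fin m) ℝ} (hB : B.IsHermitian) :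
    B.charpoly = ∏ i, (X - C (hB.eigenvalues i)) := by
  conv_lhs => rw [hB.spectral_theorem]
  rw [Unitary.conjStarAlgAut_apply]
  rw [my_charpoly_conj _ _ _ ((Matrix.mem_unitaryGroup_iff).mp hB.eigenvectorUnitary.2)]
  rw [my_charpoly_diag]
  simp [RCLike.ofReal_real_eq_id]

lemma my_dmono (d : ℕ → ℤ) (hd1 : d 1 = 1)
    (hdk : ∀ k : ℕ, 2 ≤ k → d k = 1 + ∏ j ∈ Finset.Icc 1 (k - 1), d j) :
    ∀ a b : ℕ, 2 ≤ a → a < b → d a < d b := by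
  have hstep : ∀ k : ℕ, 2 ≤ k → d (k + 1) = 1 + (d k - 1) * d k := by
    intro k hk
    obtain ⟨j, rfl⟩ : ∃ j, k = j + 1 := ⟨k - 1, by omega⟩
    have h1 : d (j + 1 + 1) = 1 + ∏ i ∈ Finset.Icc 1 (j + 1), d i := by
      have := hdk (j + 1 + 1) (by omega); simpa using this
    have h2 : ∏ i ∈ Finset.Icc 1 (j + 1), d i = (∏ i ∈ Finset.Icc 1 j, d i) * d (j + 1) :=
      Finset.prod_Icc_succ_top (by omega) _
    have h3 : d (j + 1) = 1 + ∏ i ∈ Finset.Icc 1 j, d i := by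
      have := hdk (j + 1) hk; simpa using this
    rw [h1, h2]; rw [h3]; ring
  have hge : ∀ k : ℕ, 2 ≤ k → 2 ≤ d k := by
    intro k hk
    induction k with
    | zero => omega
    | succ j ih =>
      rcases Nat.lt_or_ge j 2 with hj | hj
      · interval_cases j
        · omega
        · have := hdk 2 le_rfl
          simp [Finset.Icc_self, hd1] at this
          show 2 ≤ d 2; omega
      · have h1 := hstep j hj
        have h2 := ih hj
        nlinarith
  have honestep : ∀ k : ℕ, 2 ≤ k → d k < d (k + 1) := by
    intro k hk
    have h1 := hstep k hk
    have h2 := hge k hk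
    nlinarith
  intro a b ha hab
  induction b with
  | zero => omega
  | succ j ih =>
    rcases Nat.lt_or_ge a j with h | h
    · exact lt_trans (ih h) (honestep j (by omega))
    · have : a = j := by omega
      subst this; exact honestep a ha

/-- The characteristic polynomial of the arrowhead matrix `A`, regarded over `ℝ`,
has `2n+1` pairwise distinct real roots; in particular every eigenvalue of `A`
has multiplicity 1. -/
theorem stmt1 (n : ℕ) (hn : 1 ≤ n) (d : ℕ → ℤ)
    (hd1 : d 1 = 1)
    (hdk : ∀ k : ℕ, 2 ≤ k → d k = 1 + ∏ j ∈ Finset.Icc 1 (k - 1), d j)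
    (A : Matrix (Fin (2 * n + 1)) (Fin (2 * n + 1)) ℤ)
    (hA : ∀ i j : Fin (2 * n + 1), A i j =
      if i = j then d (i.val + 1)
      else if i.val = 0 ∨ j.val = 0 then 1 else 0) :
    ∃ lam : Fin (2 * n + 1) → ℝ, StrictMono lam ∧
      (∀ i : Fin (2 * n + 1),
        ((A.map (Int.cast : ℤ → ℝ)).charpoly).IsRoot (lam i)) ∧
      (∀ x : ℝ, ((A.map (Int.cast : ℤ → ℝ)).charpoly).IsRoot x →
        Polynomial.rootMultiplicity x ((A.map (Int.cast : ℤ → ℝ)).charpoly) = 1) := by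
  classical
  set B := A.map (Int.cast : ℤ → ℝ) with hBdef
  have hBentry : ∀ i j : Fin (2 * n + 1), B i j =
      if i = j then ((d (i.val + 1) : ℤ) : ℝ)
      else if i.val = 0 ∨ j.val = 0 then 1 else 0 := by
    intro i j
    rw [hBdef, Matrix.map_apply, hA i j]
    split_ifs <;> simp
  have hHerm : B.IsHermitian := by
    ext i j
    simp only [Matrix.conjTranspose_apply, star_trivial]
    rw [hBentry, hBentry]
    by_cases h : i = j
    · subst h; rfl
    · simp [h, Ne.symm h, or_comm]
  set μ := hHerm.eigenvalues with hμdef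
  have hchar : B.charpoly = ∏ i, (X - C (μ i)) := my_herm_charpoly hHerm
  -- injectivity of d on [2, ∞)
  have hdinj : ∀ a b : ℕ, 2 ≤ a → 2 ≤ b → a ≠ b → d a ≠ d b := by
    intro a b ha hb hab
    rcases lt_or_gt_of_ne hab with h | h
    · exact ne_of_lt (my_dmono d hd1 hdk a b ha h)
    · exact (ne_of_lt (my_dmono d hd1 hdk b a hb h)).symm
  -- injectivity of eigenvalues
  have hinj : Function.Injective μ := by
    intro i j hij
    by_contra hne
    have hv : B *ᵥ ⇑(hHerm.eigenvectorBasis i) = μ i • ⇑(hHerm.eigenvectorBasis i) :=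
      hHerm.mulVec_eigenvectorBasis i
    have hw : B *ᵥ ⇑(hHerm.eigenvectorBasis j) = μ j • ⇑(hHerm.eigenvectorBasis j) :=
      hHerm.mulVec_eigenvectorBasis j
    set v : Fin (2 * n + 1) → ℝ := ⇑(hHerm.eigenvectorBasis i) with hvdef
    set w : Fin (2 * n + 1) → ℝ := ⇑(hHerm.eigenvectorBasis j) with hwdef
    have hinner : ∀ a b : Fin (2 * n + 1),
        (∑ k, (hHerm.eigenvectorBasis a) k * (hHerm.eigenvectorBasis b) k)
          = if a = b then (1 : ℝ) else 0 := by
      intro a b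
      have h := orthonormal_iff_ite.mp hHerm.eigenvectorBasis.orthonormal a b
      rw [PiLp.inner_apply] at h
      simpa [mul_comm] using h
    have hww : (∑ k, w k * w k) = 1 := by simpa using hinner j j
    have hwv : (∑ k, w k * v k) = 0 := by simpa [Ne.symm hne] using hinner j i
    have hvv : (∑ k, v k * v k) = 1 := by simpa using hinner i i
    -- key: any eigenvector for μ i with first coordinate 0 is 0
    have key : ∀ u : Fin (2 * n + 1) → ℝ, B *ᵥ u = μ i • u → u 0 = 0 → u = 0 := by
      intro u hu h0
      have hrow : ∀ k : Fin (2 * n + 1), k ≠ 0 →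
          ((d (k.val + 1) : ℝ) - μ i) * u k = 0 := by
        intro k hk
        have hk' : k.val ≠ 0 := by
          exact Fin.val_ne_zero_iff.mpr hk
        have hsum : (∑ l, B k l * u l) = μ i * u k := by
          simpa [Matrix.mulVec, dotProduct, smul_eq_mul] using congrFun hu k
        have hsum2 : (∑ l, B k l * u l) = (d (k.val + 1) : ℝ) * u k := by
          rw [Finset.sum_eq_single k]
          · rw [hBentry]; simp
          · intro l _ hl
            rcases eq_or_ne l 0 with rfl | hl0
            · rw [h0, mul_zero]
            · have hl0' : l.val ≠ 0 := Fin.val_ne_zero_iff.mpr hl0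
              have hkl : k ≠ l := fun h => hl h.symm
              rw [hBentry]
              simp [hkl, hk', hl0']
          · intro h; exact absurd (Finset.mem_univ k) h
        rw [hsum2] at hsum
        linarith
      have hrow0 : ∑ l ∈ Finset.univ.erase 0, u l = 0 := by
        have hsum : (∑ l, B 0 l * u l) = μ i * u 0 := by
          simpa [Matrix.mulVec, dotProduct, smul_eq_mul] using congrFun hu 0
        rw [h0, mul_zero] at hsum
        have hsplit : (∑ l ∈ Finset.univ.erase 0, B 0 l * u l) + B 0 0 * u 0
            = ∑ l, B 0 l * u l := Finset.sum_erase_add _ _ (Finset.mem_univ 0)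
        rw [h0, mul_zero, add_zero, hsum] at hsplit
        rw [← hsplit]
        apply Finset.sum_congr rfl
        intro l hl
        have hl0 : l ≠ 0 := (Finset.mem_erase.mp hl).1
        rw [hBentry]
        simp [Ne.symm hl0]
      funext k
      rcases eq_or_ne k 0 with rfl | hk
      · exact h0
      · by_contra hne2
        have hlam : (d (k.val + 1) : ℝ) = μ i := by
          have := hrow k hk
          rcases mul_eq_zero.mp this with h | h
          · linarith
          · exact absurd h hne2
        have hothers : ∀ l : Fin (2 * n + 1), l ∈ Finset.univ.erase 0 → l ≠ k → u l = 0 := by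
          intro l hl hlk
          have hl0 : l ≠ 0 := (Finset.mem_erase.mp hl).1
          have hd_ne : (d (l.val + 1) : ℝ) ≠ (d (k.val + 1) : ℝ) := by
            have hl0' : l.val ≠ 0 := Fin.val_ne_zero_iff.mpr hl0
            have hk0' : k.val ≠ 0 := Fin.val_ne_zero_iff.mpr hk
            have : d (l.val + 1) ≠ d (k.val + 1) :=
              hdinj _ _ (by omega) (by omega)
                (by simp [Fin.ext_iff] at hlk; omega)
            exact_mod_cast this
          rcases mul_eq_zero.mp (hrow l hl0) with h | h
          · exact absurd (by linarith : (d (l.val + 1) : ℝ) = (d (k.val + 1) : ℝ)) hd_ne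
          · exact h
        have : ∑ l ∈ Finset.univ.erase 0, u l = u k :=
          Finset.sum_eq_single_of_mem k
            (Finset.mem_erase.mpr ⟨hk, Finset.mem_univ k⟩) hothers
        rw [hrow0] at this
        exact hne2 this.symm
    by_cases hv0 : v 0 = 0
    · have := key v hv hv0
      rw [this] at hvv
      simp at hvv
    · set u : Fin (2 * n + 1) → ℝ := fun k => v 0 * w k - w 0 * v k with hudef
      have hueq : u = v 0 • w - w 0 • v := by
        funext k; simp [hudef, smul_eq_mul]
      have hu : B *ᵥ u = μ i • u := by
        rw [hueq, Matrix.mulVec_sub, Matrix.mulVec_smul, Matrix.mulVec_smul, hv, hw, hij]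
        funext k
        simp [smul_eq_mul]
        ring
      have h0 : u 0 = 0 := by simp [hudef]; ring
      have huz := key u hu h0
      have : (∑ k, w k * u k) = v 0 := by
        have : ∀ k, w k * u k = v 0 * (w k * w k) - w 0 * (w k * v k) := by
          intro k; simp [hudef]; ring
        rw [Finset.sum_congr rfl fun k _ => this k, Finset.sum_sub_distrib,
          ← Finset.mul_sum, ← Finset.mul_sum, hww, hwv]
        ring
      rw [huz] at this
      simp at this
      exact hv0 this.symm
  -- roots of the characteristic polynomial
  have hmonic : B.charpoly.Monic := Matrix.charpoly_monic B
  have hp0 : B.charpoly ≠ 0 := hmonic.ne_zero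
  have hroots : B.charpoly.roots = Finset.univ.val.map μ := by
    rw [hchar]
    have : (∏ i, (X - C (μ i)))
        = ((Finset.univ.val.map μ).map (fun a => X - C a)).prod := by
      rw [Multiset.map_map]; rfl
    rw [this, roots_multiset_prod_X_sub_C]
  have hnodup : (Finset.univ.val.map μ).Nodup :=
    Multiset.Nodup.map hinj Finset.univ.nodup
  have hroot_of : ∀ j, B.charpoly.IsRoot (μ j) := by
    intro j
    have hmem : μ j ∈ B.charpoly.roots := by
      rw [hroots]
      exact Multiset.mem_map.mpr ⟨j, Finset.mem_univ j, rfl⟩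
    exact (Polynomial.mem_roots hp0).mp hmem
  set s : Finset ℝ := Finset.univ.image μ with hsdef
  have hcard : s.card = 2 * n + 1 := by
    rw [hsdef, Finset.card_image_of_injective _ hinj, Finset.card_univ, Fintype.card_fin]
  refine ⟨s.orderEmbOfFin hcard, (s.orderEmbOfFin hcard).strictMono, ?_, ?_⟩
  · intro i
    have hmem : s.orderEmbOfFin hcard i ∈ s := Finset.orderEmbOfFin_mem s hcard i
    obtain ⟨j, _, hj⟩ := Finset.mem_image.mp hmem
    rw [← hj]
    exact hroot_of j
  · intro x hx
    have hmem : x ∈ B.charpoly.roots := (Polynomial.mem_roots hp0).mpr hx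
    rw [← Polynomial.count_roots, hroots]
    rw [hroots] at hmem
    exact Multiset.count_eq_one_of_mem hnodup hmem
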